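/- Let H be a Hilbert space, A, Λ bounded operators with AΛ = I − K where K is compact and ‖Kf‖ < ‖f‖ for all nonzero f. Then for every f ∈ H, f = Σ_{m=0}^∞ K^m (AΛ f), with convergence in H. -/

import Mathlib

set_option maxHeartbeats 1000000
open Filter Topology Metric

section Aux

variable {H : Type*} [NormedAddCommGroup H] [NormedSpace ℝ H]

lemma aux_succ (K : H →L[ℝ] H) (m : ℕ) (x : H) : K ((K ^ m) x) = (K ^ (m + 1)) x := by
  rw [pow_succ', ContinuousLinearMap.mul_apply]

lemma aux_norm_le_one (K : H →L[ℝ] H) (hdec : ∀ f : H, f ≠ 0 → ‖K f‖ < ‖f‖) : ‖K‖ ≤ 1 := by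
  refine K.opNorm_le_bound zero_le_one fun x => ?_
  rcases eq_or_ne x 0 with h | h
  · simp [h]
  · simpa using (hdec x h).le

lemma aux_pow_apply_norm_le (K : H →L[ℝ] H) (h1 : ‖K‖ ≤ 1) :
    ∀ n : ℕ, ∀ x : H, ‖(K ^ n) x‖ ≤ ‖x‖ := by
  intro n
  induction n with
  | zero => intro x; simp
  | succ n ih =>
    intro x
    have : (K ^ (n + 1)) x = (K ^ n) (K x) := by
      rw [pow_succ, ContinuousLinearMap.mul_apply]
    rw [this]
    refine (ih (K x)).trans ?_
    calc ‖K x‖ ≤ ‖K‖ * ‖x‖ := K.le_opNorm x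
      _ ≤ 1 * ‖x‖ := by gcongr
      _ = ‖x‖ := one_mul _

lemma aux_anti (K : H →L[ℝ] H) (h1 : ‖K‖ ≤ 1) (x : H) :
    Antitone fun n : ℕ => ‖(K ^ n) x‖ := by
  refine antitone_nat_of_succ_le fun n => ?_
  have : (K ^ (n + 1)) x = (K ^ 1) ((K ^ n) x) := by
    rw [← ContinuousLinearMap.mul_apply, ← pow_add, add_comm]
  rw [this]
  simpa using aux_pow_apply_norm_le K h1 1 ((K ^ n) x)

lemma aux_tendsto_zero (K : H →L[ℝ] H) (hcpt : IsCompactOperator K)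
    (hdec : ∀ f : H, f ≠ 0 → ‖K f‖ < ‖f‖) (f : H) :
    Tendsto (fun n : ℕ => (K ^ n) f) atTop (𝓝 0) := by
  have h1 : ‖K‖ ≤ 1 := aux_norm_le_one K hdec
  rw [tendsto_zero_iff_norm_tendsto_zero]
  set b : ℕ → ℝ := fun n => ‖(K ^ n) f‖ with hb
  have hanti : Antitone b := aux_anti K h1 f
  have hbdd : BddBelow (Set.range b) := ⟨0, fun y ⟨n, hn⟩ => hn ▸ norm_nonneg _⟩
  set c : ℝ := ⨅ n, b n with hc
  have htend : Tendsto b atTop (𝓝 c) := tendsto_atTop_ciInf hanti hbdd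
  -- the image of the closed ball of radius ‖f‖ has compact closure
  have hcpt' : IsCompactOperator ⇑(K : H →ₗ[ℝ] H) := hcpt
  have hS : IsCompact (closure ((K : H →ₗ[ℝ] H) '' closedBall 0 ‖f‖)) :=
    hcpt'.isCompact_closure_image_closedBall ‖f‖
  have hmem : ∀ n : ℕ, (K ^ (n + 1)) f ∈ closure ((K : H →ₗ[ℝ] H) '' closedBall 0 ‖f‖) := by
    intro n
    apply subset_closure
    refine ⟨(K ^ n) f, ?_, ?_⟩
    · simpa [mem_closedBall, dist_eq_norm] using aux_pow_apply_norm_le K h1 n f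
    · rw [pow_succ', ContinuousLinearMap.mul_apply]; rfl
  obtain ⟨y, -, φ, hφ, hty⟩ := hS.tendsto_subseq hmem
  have hφt : Tendsto φ atTop atTop := hφ.tendsto_atTop
  have hby : Tendsto (fun j => b (φ j + 1)) atTop (𝓝 c) :=
    htend.comp (tendsto_atTop_mono (fun j => Nat.le_succ (φ j)) hφt)
  have hny : ‖y‖ = c := by
    have : Tendsto (fun j => ‖(K ^ (φ j + 1)) f‖) atTop (𝓝 ‖y‖) :=
      (continuous_norm.tendsto y).comp hty
    exact tendsto_nhds_unique this hby
  have hKy : ‖K y‖ = c := by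
    have h1' : Tendsto (fun j => K ((K ^ (φ j + 1)) f)) atTop (𝓝 (K y)) :=
      (K.continuous.tendsto y).comp hty
    have heq : ∀ j, K ((K ^ (φ j + 1)) f) = (K ^ (φ j + 2)) f := by
      intro j
      exact aux_succ K (φ j + 1) f
    have h2' : Tendsto (fun j => ‖(K ^ (φ j + 2)) f‖) atTop (𝓝 ‖K y‖) := by
      have := (continuous_norm.tendsto (K y)).comp h1'
      simpa only [Function.comp_def, heq] using this
    have h3' : Tendsto (fun j => b (φ j + 2)) atTop (𝓝 c) :=
      htend.comp (tendsto_atTop_mono (fun j => Nat.le_add_right (φ j) 2) hφt)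
    exact tendsto_nhds_unique h2' h3'
  have hy0 : y = 0 := by
    by_contra hy
    have := hdec y hy
    rw [hKy, hny] at this
    exact lt_irrefl c this
  have hc0 : c = 0 := by rw [← hny, hy0, norm_zero]
  rwa [hc0] at htend

lemma aux_exists_pow_norm_le (K : H →L[ℝ] H) (hcpt : IsCompactOperator K)
    (hdec : ∀ f : H, f ≠ 0 → ‖K f‖ < ‖f‖) :
    ∃ N : ℕ, 0 < N ∧ ‖K ^ N‖ ≤ 2⁻¹ := by
  have h1 : ‖K‖ ≤ 1 := aux_norm_le_one K hdec
  set S : Set H := closure ((K : H →ₗ[ℝ] H) '' closedBall 0 1) with hSdef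
  have hcpt' : IsCompactOperator ⇑(K : H →ₗ[ℝ] H) := hcpt
  have hS : IsCompact S := hcpt'.isCompact_closure_image_closedBall 1
  set U : ℕ → Set H := fun n => {x | ‖(K ^ n) x‖ < 2⁻¹} with hU
  have hUo : ∀ n, IsOpen (U n) := fun n =>
    isOpen_lt (continuous_norm.comp (K ^ n).continuous) continuous_const
  have hmono : Monotone U := by
    intro m n hmn x hx
    exact lt_of_le_of_lt (aux_anti K h1 x hmn) hx
  have hcov : S ⊆ ⋃ n, U n := by
    intro x _
    have : Tendsto (fun n : ℕ => ‖(K ^ n) x‖) atTop (𝓝 0) := by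
      have := aux_tendsto_zero K hcpt hdec x
      rw [tendsto_zero_iff_norm_tendsto_zero] at this
      exact this
    have : ∀ᶠ n in atTop, ‖(K ^ n) x‖ < 2⁻¹ :=
      this.eventually (eventually_lt_nhds (by norm_num : (0:ℝ) < 2⁻¹))
    obtain ⟨n, hn⟩ := this.exists
    exact Set.mem_iUnion.2 ⟨n, hn⟩
  obtain ⟨n, hn⟩ := hS.elim_directed_cover U hUo hcov (hmono.directed_le)
  refine ⟨n + 1, Nat.succ_pos n, ?_⟩
  refine ContinuousLinearMap.opNorm_le_bound _ (by norm_num) fun x => ?_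
  rcases eq_or_ne x 0 with h | h
  · simp [h]
  · have hx1 : ‖x‖⁻¹ • x ∈ closedBall (0:H) 1 := by
      simp [norm_smul, abs_of_nonneg (inv_nonneg.2 (norm_nonneg x)),
        inv_mul_cancel₀ (norm_ne_zero_iff.2 h)]
    have hKx : K (‖x‖⁻¹ • x) ∈ S :=
      subset_closure ⟨‖x‖⁻¹ • x, hx1, rfl⟩
    have := hn hKx
    have hlt : ‖(K ^ n) (K (‖x‖⁻¹ • x))‖ < 2⁻¹ := this
    have heq : (K ^ (n + 1)) (‖x‖⁻¹ • x) = (K ^ n) (K (‖x‖⁻¹ • x)) := by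
      rw [pow_succ, ContinuousLinearMap.mul_apply]
    have h2 : ‖(K ^ (n + 1)) (‖x‖⁻¹ • x)‖ ≤ 2⁻¹ := by rw [heq]; exact hlt.le
    have h3 : (K ^ (n + 1)) (‖x‖⁻¹ • x) = ‖x‖⁻¹ • (K ^ (n + 1)) x := by
      rw [map_smul]
    rw [h3, norm_smul, norm_inv, norm_norm] at h2
    have hxpos : (0:ℝ) < ‖x‖ := norm_pos_iff.2 h
    calc ‖(K ^ (n + 1)) x‖ = ‖x‖ * (‖x‖⁻¹ * ‖(K ^ (n + 1)) x‖) := by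
          field_simp
      _ ≤ ‖x‖ * 2⁻¹ := by gcongr
      _ = 2⁻¹ * ‖x‖ := mul_comm _ _

end Aux

section Aux2

variable {H : Type*} [NormedAddCommGroup H] [NormedSpace ℝ H]

lemma aux_qbound (K : H →L[ℝ] H) {N : ℕ} (hN : ‖K ^ N‖ ≤ 2⁻¹) :
    ∀ q : ℕ, ∀ x : H, ‖(K ^ (N * q)) x‖ ≤ (2⁻¹ : ℝ) ^ q * ‖x‖ := by
  intro q
  induction q with
  | zero => intro x; simp
  | succ q ih =>
    intro x
    have heq : (K ^ (N * (q + 1))) x = (K ^ (N * q)) ((K ^ N) x) := by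
      rw [Nat.mul_succ, pow_add, ContinuousLinearMap.mul_apply]
    rw [heq]
    calc ‖(K ^ (N * q)) ((K ^ N) x)‖ ≤ (2⁻¹ : ℝ) ^ q * ‖(K ^ N) x‖ := ih _
      _ ≤ (2⁻¹ : ℝ) ^ q * (2⁻¹ * ‖x‖) := by
          refine mul_le_mul_of_nonneg_left ?_ (by positivity)
          exact ((K ^ N).le_opNorm x).trans (mul_le_mul_of_nonneg_right hN (norm_nonneg x))
      _ = (2⁻¹ : ℝ) ^ (q + 1) * ‖x‖ := by ring

lemma aux_geom (K : H →L[ℝ] H) (hcpt : IsCompactOperator K)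
    (hdec : ∀ f : H, f ≠ 0 → ‖K f‖ < ‖f‖) :
    ∃ ρ : ℝ, 0 < ρ ∧ ρ < 1 ∧ ∀ n : ℕ, ∀ x : H, ‖(K ^ n) x‖ ≤ 2 * ρ ^ n * ‖x‖ := by
  have h1 : ‖K‖ ≤ 1 := aux_norm_le_one K hdec
  obtain ⟨N, hN0, hN⟩ := aux_exists_pow_norm_le K hcpt hdec
  have hNR : (0:ℝ) < (N:ℝ)⁻¹ := by
    rw [inv_pos]; exact_mod_cast hN0
  refine ⟨(2⁻¹ : ℝ) ^ ((N:ℝ)⁻¹), Real.rpow_pos_of_pos (by norm_num) _,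
    Real.rpow_lt_one (by norm_num) (by norm_num) hNR, ?_⟩
  set ρ : ℝ := (2⁻¹ : ℝ) ^ ((N:ℝ)⁻¹) with hρ
  have hρ0 : 0 < ρ := Real.rpow_pos_of_pos (by norm_num) _
  have hρ1 : ρ < 1 := Real.rpow_lt_one (by norm_num) (by norm_num) hNR
  have hρN : ρ ^ N = 2⁻¹ := by
    rw [hρ, ← Real.rpow_natCast ((2⁻¹ : ℝ) ^ ((N:ℝ)⁻¹)) N, ← Real.rpow_mul (by norm_num),
      inv_mul_cancel₀ (by exact_mod_cast hN0.ne'), Real.rpow_one]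
  intro n x
  set q : ℕ := n / N with hq
  set r : ℕ := n % N with hr
  have hn : N * q + r = n := Nat.div_add_mod n N
  have hNq : N * q ≤ n := by omega
  have step1 : ‖(K ^ n) x‖ ≤ ‖(K ^ (N * q)) x‖ := aux_anti K h1 x hNq
  have step2 : ‖(K ^ (N * q)) x‖ ≤ ρ ^ (N * q) * ‖x‖ := by
    have h := aux_qbound K hN q x
    have he : (2⁻¹ : ℝ) ^ q = ρ ^ (N * q) := by rw [pow_mul, hρN]
    rwa [he] at h
  have hrN : r ≤ N := (Nat.mod_lt n hN0).le
  have h5 : ρ ^ N ≤ ρ ^ r := pow_le_pow_of_le_one hρ0.le hρ1.le hrN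
  have h6 : ρ ^ (N * q) * 2⁻¹ ≤ ρ ^ n := by
    calc ρ ^ (N * q) * 2⁻¹ = ρ ^ (N * q) * ρ ^ N := by rw [hρN]
      _ ≤ ρ ^ (N * q) * ρ ^ r := mul_le_mul_of_nonneg_left h5 (by positivity)
      _ = ρ ^ (N * q + r) := (pow_add ρ _ _).symm
      _ = ρ ^ n := by rw [hn]
  have h7 : ρ ^ (N * q) ≤ 2 * ρ ^ n := by linarith
  calc ‖(K ^ n) x‖ ≤ ρ ^ (N * q) * ‖x‖ := step1.trans step2
    _ ≤ 2 * ρ ^ n * ‖x‖ := mul_le_mul_of_nonneg_right h7 (norm_nonneg x)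

end Aux2

/-- If `A, Λ` are bounded operators on a Hilbert space with `AΛ = I − K`,
`K` compact and `‖Kf‖ < ‖f‖` for all nonzero `f`, then every `f` satisfies the Neumann
series reconstruction `f = Σ_{m=0}^∞ Kᵐ (AΛf)`, convergent in `H`. -/
theorem stmt10 {H : Type*} [NormedAddCommGroup H] [InnerProductSpace ℝ H] [CompleteSpace H]
    (A Lam K : H →L[ℝ] H) (hAL : A.comp Lam = 1 - K)
    (hcpt : IsCompactOperator K)
    (hdec : ∀ f : H, f ≠ 0 → ‖K f‖ < ‖f‖) :
    ∀ f : H, HasSum (fun m : ℕ => (K ^ m) (A (Lam f))) f := by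
  intro f
  have hg : A (Lam f) = f - K f := by
    have := ContinuousLinearMap.ext_iff.1 hAL f
    simpa using this
  obtain ⟨ρ, hρ0, hρ1, hbound⟩ := aux_geom K hcpt hdec
  set g : H := A (Lam f) with hgdef
  have hsummable : Summable fun m : ℕ => (K ^ m) g := by
    refine Summable.of_norm ?_
    refine Summable.of_nonneg_of_le (fun n => norm_nonneg _) (fun n => hbound n g) ?_
    exact ((summable_geometric_of_lt_one hρ0.le hρ1).mul_left 2).mul_right ‖g‖
  obtain ⟨L, hL⟩ := hsummable
  have hps : ∀ n : ℕ, ∑ m ∈ Finset.range n, (K ^ m) g = f - (K ^ n) f := by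
    intro n
    have hterm : ∀ m : ℕ, (K ^ m) g = (K ^ m) f - (K ^ (m + 1)) f := by
      intro m
      rw [hg, map_sub, pow_succ, ContinuousLinearMap.mul_apply]
    calc ∑ m ∈ Finset.range n, (K ^ m) g
        = ∑ m ∈ Finset.range n, ((K ^ m) f - (K ^ (m + 1)) f) := by
          exact Finset.sum_congr rfl fun m _ => hterm m
      _ = (K ^ 0) f - (K ^ n) f := Finset.sum_range_sub' (fun m => (K ^ m) f) n
      _ = f - (K ^ n) f := by simp
  have htends : Tendsto (fun n : ℕ => ∑ m ∈ Finset.range n, (K ^ m) g) atTop (𝓝 f) := by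
    have h0 : Tendsto (fun n : ℕ => f - (K ^ n) f) atTop (𝓝 (f - 0)) :=
      tendsto_const_nhds.sub (aux_tendsto_zero K hcpt hdec f)
    rw [sub_zero] at h0
    simpa only [hps] using h0
  have hLf : L = f := tendsto_nhds_unique hL.tendsto_sum_nat htends
  rwa [hLf] at hL
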